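/- arXiv:2205.11033 — 4 statements merged into one kernel-verified Lean document; each statement's English description precedes it below -/
import Mathlib

section
/- Let f : ℝ^n → ℝ be twice differentiable with minimizer x* and minimum value f*. Suppose there is μ > 0 such that for all x, y: f(x) ≥ f(y) + ⟨∇f(y), x - y⟩ + (μ/2)·(x-y)^T ∇²f(y) (x-y), the Hessian ∇²f(y) is positive semidefinite, and ∇f(y) ∈ Range(∇²f(y)) for all y. Then for every x, f(x) - f* ≤ (1/(2μ))·∇f(x)^T (∇²f(x))^† ∇f(x). -/
open Matrix

/-- `B` is the Moore–Penrose pseudoinverse of `A`. -/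
def IsMoorePenrose {m n : ℕ} (A : Matrix (Fin m) (Fin n) ℝ)
    (B : Matrix (Fin n) (Fin m) ℝ) : Prop :=
  A * B * A = A ∧ B * A * B = B ∧ (A * B)ᵀ = A * B ∧ (B * A)ᵀ = B * A

theorem suboptimality_bound {n : ℕ}
    (f : (Fin n → ℝ) → ℝ) (g : (Fin n → ℝ) → (Fin n → ℝ))
    (Hess Hd : (Fin n → ℝ) → Matrix (Fin n) (Fin n) ℝ)
    (μ : ℝ) (hμ : 0 < μ)
    (hHess : ∀ y, (Hess y).PosSemidef)
    (hHd : ∀ y, IsMoorePenrose (Hess y) (Hd y))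
    (hrange : ∀ y, g y ∈ LinearMap.range (Hess y).mulVecLin)
    (hconv : ∀ x y, f x ≥ f y + g y ⬝ᵥ (x - y) + μ / 2 * ((x - y) ⬝ᵥ (Hess y).mulVec (x - y)))
    (xstar : Fin n → ℝ) (fstar : ℝ) (hstar : f xstar = fstar)
    (hmin : ∀ x, fstar ≤ f x) :
    ∀ x, f x - fstar ≤ (1 / (2 * μ)) * (g x ⬝ᵥ (Hd x).mulVec (g x)) := by
  intro x
  obtain ⟨v, hv⟩ := hrange x
  simp only [mulVecLin_apply] at hv
  set H := Hess x with hH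
  set P := Hd x with hP
  set g0 := g x with hg0
  have hHsymm : Hᵀ = H := (hHess x).1
  have h1 : H * P * H = H := (hHd x).1
  -- H *ᵥ (P *ᵥ g0) = g0
  have hHu : H *ᵥ (P *ᵥ g0) = g0 := by
    rw [← hv, mulVec_mulVec, mulVec_mulVec, h1]
  set u := P *ᵥ g0 with hu
  set z := xstar - x with hz
  set S := g0 ⬝ᵥ u with hS
  set A := z ⬝ᵥ (H *ᵥ z) with hA
  set B := g0 ⬝ᵥ z with hB
  -- the key positivity
  have hpos : 0 ≤ A + (2/μ) * B + (1/μ^2) * S := by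
    have := (hHess x).dotProduct_mulVec_nonneg (z + (1/μ) • u)
    simp only [RCLike.star_def, star_trivial, RCLike.re_to_real] at this
    rw [mulVec_add, mulVec_smul, dotProduct_add, add_dotProduct, add_dotProduct,
      dotProduct_smul, smul_dotProduct, smul_dotProduct, dotProduct_smul, hHu] at this
    have huz : u ⬝ᵥ (H *ᵥ z) = g0 ⬝ᵥ z := by
      rw [dotProduct_mulVec, ← mulVec_transpose, hHsymm, hHu]
    rw [huz] at this
    have hzg : z ⬝ᵥ g0 = B := dotProduct_comm z g0
    have hug : u ⬝ᵥ g0 = S := dotProduct_comm u g0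
    rw [hzg, hug] at this
    rw [← hH] at this
    simp only [smul_eq_mul] at this
    rw [← hA, ← hB] at this
    have e1 : 2/μ * B = 1/μ * B + 1/μ * B := by ring
    have e2 : 1/μ^2 * S = 1/μ * (1/μ * S) := by ring
    linarith [this]
  have hc := hconv xstar x
  rw [hstar] at hc
  have : f x - fstar ≤ -B - μ/2 * A := by
    simp only [← hz, ← hA, ← hB] at hc
    linarith
  have hfin : -B - μ/2 * A ≤ 1/(2*μ) * S := by
    have h2 : 0 ≤ μ/2 * (A + (2/μ) * B + (1/μ^2) * S) := by positivity
    have h3 : μ/2 * (A + (2/μ) * B + (1/μ^2) * S) = μ/2*A + B + 1/(2*μ)*S := by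
      field_simp
    linarith [h2, h3.symm ▸ h2]
  linarith
end

section
/- Let H be symmetric positive semidefinite, G symmetric positive definite, ρ > 0, and set Y = H^{1/2} G^{-1/2}, K = ((1/ρ)G + H)^{-1}, L = H^{1/2}((1/ρ)I + H^{1/2}G^{-1}H^{1/2})^{-1}H^{1/2}. Then the matrices H^{1/2} K H^{1/2} and G^{-1/2} L G^{-1/2} have the same nonzero eigenvalues; specifically, each nonzero eigenvalue equals ρσ²/(1 + ρσ²) for some nonzero singular value σ of Y. -/
open Matrix

/-- `t` is an eigenvalue of the matrix `A`. -/
def HasEigen {n : ℕ} (A : Matrix (Fin n) (Fin n) ℝ) (t : ℝ) : Prop :=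
  ∃ v : Fin n → ℝ, v ≠ 0 ∧ A.mulVec v = t • v

open scoped ComplexOrder in
noncomputable def Matrix.PosSemidef.sqrt {n 𝕜 : Type*} [Fintype n] [DecidableEq n] [RCLike 𝕜]
    {A : Matrix n n 𝕜} (hA : A.PosSemidef) : Matrix n n 𝕜 :=
  hA.1.eigenvectorUnitary.1 * diagonal ((↑) ∘ (√·) ∘ hA.1.eigenvalues) *
  (star hA.1.eigenvectorUnitary : Matrix n n 𝕜)

open scoped ComplexOrder in
lemma Matrix.PosSemidef.posSemidef_sqrt {n 𝕜 : Type*} [Fintype n] [DecidableEq n] [RCLike 𝕜]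
    {A : Matrix n n 𝕜} (hA : A.PosSemidef) : hA.sqrt.PosSemidef := by
  unfold Matrix.PosSemidef.sqrt
  apply PosSemidef.mul_mul_conjTranspose_same
  rw [posSemidef_diagonal_iff]
  intro i
  simp only [Function.comp_apply]
  exact_mod_cast Real.sqrt_nonneg _

open scoped ComplexOrder in
lemma Matrix.PosSemidef.sqrt_mul_self {n 𝕜 : Type*} [Fintype n] [DecidableEq n] [RCLike 𝕜]
    {A : Matrix n n 𝕜} (hA : A.PosSemidef) : hA.sqrt * hA.sqrt = A := by
  unfold Matrix.PosSemidef.sqrt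
  conv_rhs => rw [hA.1.spectral_theorem]
  have hU : (star hA.1.eigenvectorUnitary : Matrix n n 𝕜) * hA.1.eigenvectorUnitary.1 = 1 :=
    Unitary.coe_star_mul_self _
  rw [Unitary.conjStarAlgAut_apply]
  simp only [Matrix.mul_assoc]
  rw [← Matrix.mul_assoc _ _ (diagonal _ * _), hU, Matrix.one_mul, ← Matrix.mul_assoc (diagonal _),
    diagonal_mul_diagonal]
  congr 3
  funext i
  simp only [Function.comp_apply]
  rw [← RCLike.ofReal_mul, Real.mul_self_sqrt (hA.eigenvalues_nonneg i)]

namespace SameNonzeroAux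

variable {n : ℕ}

lemma dp_self_pos {v : Fin n → ℝ} (hv : v ≠ 0) : 0 < v ⬝ᵥ v := by
  have h := dotProduct_self_star_pos_iff (v := v) |>.2 hv
  simpa using h

lemma posDef_smul {M : Matrix (Fin n) (Fin n) ℝ} (hM : M.PosDef) {c : ℝ} (hc : 0 < c) :
    (c • M).PosDef := by
  have herm : (c • M).IsHermitian := by
    rw [Matrix.IsHermitian, conjTranspose_smul, star_trivial, hM.1.eq]
  refine PosDef.of_dotProduct_mulVec_pos herm (fun x hx => ?_)
  rw [smul_mulVec, dotProduct_smul, smul_eq_mul]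
  exact mul_pos hc (hM.dotProduct_mulVec_pos hx)

lemma eig_nonneg {C : Matrix (Fin n) (Fin n) ℝ} (hC : C.PosSemidef) {v : Fin n → ℝ}
    (hv : v ≠ 0) {l : ℝ} (h : C.mulVec v = l • v) : 0 ≤ l := by
  have h1 := hC.dotProduct_mulVec_nonneg v
  rw [h, star_trivial, dotProduct_smul, smul_eq_mul] at h1
  have hvv := dp_self_pos hv
  by_contra hneg
  push_neg at hneg
  nlinarith

lemma eig_pos {C : Matrix (Fin n) (Fin n) ℝ} (hC : C.PosDef) {v : Fin n → ℝ}
    (hv : v ≠ 0) {l : ℝ} (h : C.mulVec v = l • v) : 0 < l := by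
  have h1 := hC.dotProduct_mulVec_pos hv
  rw [h, star_trivial, dotProduct_smul, smul_eq_mul] at h1
  have hvv := dp_self_pos hv
  by_contra hneg
  push_neg at hneg
  nlinarith

lemma inv_eig {N : Matrix (Fin n) (Fin n) ℝ} (hdet : IsUnit N.det) {v : Fin n → ℝ}
    {μ : ℝ} (hμ : μ ≠ 0) (h : N.mulVec v = μ • v) : N⁻¹.mulVec v = μ⁻¹ • v := by
  have h1 : N⁻¹.mulVec (N.mulVec v) = v := by
    rw [mulVec_mulVec, Matrix.nonsing_inv_mul N hdet, one_mulVec]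
  rw [h, mulVec_smul] at h1
  calc N⁻¹.mulVec v = μ⁻¹ • (μ • N⁻¹.mulVec v) := by rw [smul_smul, inv_mul_cancel₀ hμ, one_smul]
  _ = μ⁻¹ • v := by rw [h1]

/-- Forward: eigenvalues of `1 - ρ⁻¹ • (ρ⁻¹•1 + C)⁻¹` come from eigenvalues of `C`. -/
lemma forward {C : Matrix (Fin n) (Fin n) ℝ} (hC : C.PosSemidef) {ρ t : ℝ} (hρ : 0 < ρ)
    (ht : t ≠ 0)
    (h : HasEigen (1 - ρ⁻¹ • (ρ⁻¹ • (1 : Matrix (Fin n) (Fin n) ℝ) + C)⁻¹) t) :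
    ∃ l : ℝ, 0 < l ∧ HasEigen C l ∧ t = ρ * l / (1 + ρ * l) := by
  obtain ⟨v, hv, hveq⟩ := h
  set NC := ρ⁻¹ • (1 : Matrix (Fin n) (Fin n) ℝ) + C with hNCdef
  have hρ' : (0:ℝ) < ρ⁻¹ := by positivity
  have hNCpd : NC.PosDef := (posDef_smul Matrix.PosDef.one hρ').add_posSemidef hC
  have hdet : IsUnit NC.det := hNCpd.det_pos.ne'.isUnit
  rw [sub_mulVec, one_mulVec, smul_mulVec] at hveq
  have hinv : NC⁻¹.mulVec v = (ρ * (1 - t)) • v := by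
    have h2 : ρ⁻¹ • NC⁻¹.mulVec v = (1 - t) • v := by
      rw [sub_smul, one_smul, ← hveq]; abel
    calc NC⁻¹.mulVec v = ρ • (ρ⁻¹ • NC⁻¹.mulVec v) := by
          rw [smul_smul, mul_inv_cancel₀ hρ.ne', one_smul]
    _ = (ρ * (1 - t)) • v := by rw [h2, smul_smul]
  have hμpos : 0 < ρ * (1 - t) := eig_pos hNCpd.inv hv hinv
  have h1t : (0:ℝ) < 1 - t := by nlinarith
  have hNeig : NC.mulVec v = (ρ * (1 - t))⁻¹ • v := by
    have h3 : (NC⁻¹)⁻¹.mulVec v = (ρ * (1 - t))⁻¹ • v :=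
      inv_eig (Matrix.isUnit_nonsing_inv_det_iff.mpr hdet) hμpos.ne' hinv
    rwa [Matrix.nonsing_inv_nonsing_inv NC hdet] at h3
  set l : ℝ := (ρ * (1 - t))⁻¹ - ρ⁻¹ with hldef
  have hCeig : C.mulVec v = l • v := by
    have h4 : (ρ⁻¹ • (1 : Matrix (Fin n) (Fin n) ℝ)).mulVec v + C.mulVec v
        = (ρ * (1 - t))⁻¹ • v := by rw [← add_mulVec, ← hNCdef, hNeig]
    rw [smul_mulVec, one_mulVec] at h4
    rw [hldef, sub_smul, ← h4]
    abel
  have hlnz : l ≠ 0 := by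
    intro h0
    rw [hldef, sub_eq_zero] at h0
    have : ρ * (1 - t) = ρ := by
      have := inv_injective h0
      rw [this]
    have : (1:ℝ) - t = 1 := by
      field_simp at this
      tauto
    exact ht (by linarith)
  have hlpos : 0 < l := lt_of_le_of_ne (eig_nonneg hC hv hCeig) (Ne.symm hlnz)
  refine ⟨l, hlpos, ⟨v, hv, hCeig⟩, ?_⟩
  rw [hldef]
  have h1t' : (1:ℝ) - t ≠ 0 := h1t.ne'
  field_simp
  ring_nf

/-- Backward: eigenvalues of `C` give eigenvalues of `1 - ρ⁻¹ • (ρ⁻¹•1 + C)⁻¹`. -/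
lemma backward {C : Matrix (Fin n) (Fin n) ℝ} (hC : C.PosSemidef) {ρ l : ℝ} (hρ : 0 < ρ)
    (hl : 0 < l) (h : HasEigen C l) :
    HasEigen (1 - ρ⁻¹ • (ρ⁻¹ • (1 : Matrix (Fin n) (Fin n) ℝ) + C)⁻¹) (ρ * l / (1 + ρ * l)) := by
  obtain ⟨v, hv, hveq⟩ := h
  set NC := ρ⁻¹ • (1 : Matrix (Fin n) (Fin n) ℝ) + C with hNCdef
  have hρ' : (0:ℝ) < ρ⁻¹ := by positivity
  have hNCpd : NC.PosDef := (posDef_smul Matrix.PosDef.one hρ').add_posSemidef hC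
  have hdet : IsUnit NC.det := hNCpd.det_pos.ne'.isUnit
  have hNeig : NC.mulVec v = (ρ⁻¹ + l) • v := by
    rw [hNCdef, add_mulVec, smul_mulVec, one_mulVec, hveq, add_smul]
  have hpos : (0:ℝ) < ρ⁻¹ + l := by positivity
  have hinv : NC⁻¹.mulVec v = (ρ⁻¹ + l)⁻¹ • v := inv_eig hdet hpos.ne' hNeig
  refine ⟨v, hv, ?_⟩
  rw [sub_mulVec, one_mulVec, smul_mulVec, hinv, smul_smul,
    show v - (ρ⁻¹ * (ρ⁻¹ + l)⁻¹) • v = (1 - ρ⁻¹ * (ρ⁻¹ + l)⁻¹) • v from by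
      rw [sub_smul, one_smul]]
  congr 1
  have h1 : (0:ℝ) < ρ⁻¹ + l := by positivity
  have h2 : (0:ℝ) < 1 + ρ * l := by positivity
  field_simp
  ring

/-- Transfer nonzero eigenvalues from `Y * Yᵀ` to `Yᵀ * Y`. -/
lemma transfer (Y : Matrix (Fin n) (Fin n) ℝ) {l : ℝ} (hl : l ≠ 0)
    (h : HasEigen (Y * Yᵀ) l) : HasEigen (Yᵀ * Y) l := by
  obtain ⟨v, hv, hveq⟩ := h
  refine ⟨Yᵀ.mulVec v, ?_, ?_⟩
  · intro h0
    have : (Y * Yᵀ).mulVec v = 0 := by rw [← mulVec_mulVec, h0, mulVec_zero]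
    rw [hveq] at this
    exact hv (by simpa [hl] using smul_eq_zero.mp this)
  · rw [mulVec_mulVec, Matrix.mul_assoc, ← mulVec_mulVec, hveq, mulVec_smul]

set_option maxHeartbeats 1600000 in
lemma main_aux {n : ℕ} (H G : Matrix (Fin n) (Fin n) ℝ)
    (hH : H.PosSemidef) (hG : G.PosDef) (ρ : ℝ) (hρ : 0 < ρ)
    (S R : Matrix (Fin n) (Fin n) ℝ) (hS2 : S * S = H) (hR2 : R * R = G)
    (hSsym : Sᵀ = S) (hRsym : Rᵀ = R) (t : ℝ) (ht : t ≠ 0) :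
    ((HasEigen (S * (ρ⁻¹ • G + H)⁻¹ * S) t ↔
        HasEigen (R⁻¹ *
          (S * (ρ⁻¹ • (1 : Matrix (Fin n) (Fin n) ℝ) + S * G⁻¹ * S)⁻¹ * S) *
          R⁻¹) t) ∧
      (HasEigen (S * (ρ⁻¹ • G + H)⁻¹ * S) t →
        ∃ s : ℝ, 0 < s ∧
          HasEigen ((S * R⁻¹)ᵀ * (S * R⁻¹)) (s ^ 2) ∧
          t = ρ * s ^ 2 / (1 + ρ * s ^ 2))) := by
  set Y := S * R⁻¹ with hYdef
  have hρ' : (0:ℝ) < ρ⁻¹ := by positivity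
  have hGdet : IsUnit G.det := hG.det_pos.ne'.isUnit
  have hRdet : IsUnit R.det := by
    have h1 : R.det * R.det = G.det := by rw [← det_mul, hR2]
    have h2 : G.det ≠ 0 := hG.det_pos.ne'
    exact isUnit_iff_ne_zero.mpr (fun h0 => h2 (by rw [← h1, h0, mul_zero]))
  have hRR : R⁻¹ * R = 1 := Matrix.nonsing_inv_mul R hRdet
  have hRR' : R * R⁻¹ = 1 := Matrix.mul_nonsing_inv R hRdet
  have hGinv : G⁻¹ = R⁻¹ * R⁻¹ := by rw [← hR2, Matrix.mul_inv_rev]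
  have hYT : Yᵀ = R⁻¹ * S := by
    rw [hYdef, transpose_mul, transpose_nonsing_inv, hRsym, hSsym]
  -- the two Gram matrices
  have hW1 : S * G⁻¹ * S = Y * Yᵀ := by
    rw [hYT, hYdef, hGinv, Matrix.mul_assoc, Matrix.mul_assoc, Matrix.mul_assoc]
  have hW2 : Yᵀ * Y = R⁻¹ * H * R⁻¹ := by
    rw [hYT, hYdef, ← hS2, Matrix.mul_assoc, Matrix.mul_assoc, Matrix.mul_assoc]
  have hYYT : (Y * Yᵀ).PosSemidef := by
    have := posSemidef_self_mul_conjTranspose Y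
    rwa [conjTranspose_eq_transpose_of_trivial] at this
  have hYTY : (Yᵀ * Y).PosSemidef := by
    have := posSemidef_conjTranspose_mul_self Y
    rwa [conjTranspose_eq_transpose_of_trivial] at this
  -- the shifted matrices
  set N := ρ⁻¹ • (1 : Matrix (Fin n) (Fin n) ℝ) + S * G⁻¹ * S with hNdef
  set M := ρ⁻¹ • (1 : Matrix (Fin n) (Fin n) ℝ) + Yᵀ * Y with hMdef
  set P := ρ⁻¹ • G + H with hPdef
  have hN1 : N = ρ⁻¹ • (1 : Matrix (Fin n) (Fin n) ℝ) + Y * Yᵀ := by rw [hNdef, hW1]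
  have hNpd : N.PosDef := by
    rw [hN1]; exact (posDef_smul Matrix.PosDef.one hρ').add_posSemidef hYYT
  have hMpd : M.PosDef := (posDef_smul Matrix.PosDef.one hρ').add_posSemidef hYTY
  have hPpd : P.PosDef := (posDef_smul hG hρ').add_posSemidef hH
  have hNdet : IsUnit N.det := hNpd.det_pos.ne'.isUnit
  have hMdet : IsUnit M.det := hMpd.det_pos.ne'.isUnit
  have hPdet : IsUnit P.det := hPpd.det_pos.ne'.isUnit
  -- key identity A
  have hNS : N * S = S * G⁻¹ * P := by
    rw [hNdef, hPdef, add_mul, mul_add, Matrix.smul_mul, Matrix.one_mul, Matrix.mul_smul,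
      Matrix.mul_assoc S G⁻¹ G, Matrix.nonsing_inv_mul G hGdet, Matrix.mul_one, ← hS2]
    congr 1
    simp only [Matrix.mul_assoc]
  have h7 : S * (G⁻¹ * S) = N - ρ⁻¹ • 1 := by
    rw [hNdef, ← Matrix.mul_assoc]; abel
  have keyA : S * P⁻¹ * S = 1 - ρ⁻¹ • N⁻¹ := by
    have h5 : N * (S * (P⁻¹ * S)) = S * (G⁻¹ * S) := by
      rw [← Matrix.mul_assoc N S (P⁻¹ * S), hNS]
      simp only [Matrix.mul_assoc]
      rw [Matrix.mul_nonsing_inv_cancel_left P S hPdet]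
    have h6 : S * P⁻¹ * S = N⁻¹ * (S * (G⁻¹ * S)) := by
      rw [← h5, Matrix.nonsing_inv_mul_cancel_left N _ hNdet, Matrix.mul_assoc]
    rw [h6, h7, Matrix.mul_sub, Matrix.nonsing_inv_mul N hNdet, Matrix.mul_smul,
      Matrix.mul_one]
  -- key identity B
  have hMQ : M * (R⁻¹ * S) = (R⁻¹ * S) * N := by
    rw [hMdef, hNdef, add_mul, mul_add, Matrix.smul_mul, Matrix.one_mul,
      Matrix.mul_smul, hW2, hGinv, ← hS2]
    simp only [Matrix.mul_one, Matrix.mul_assoc]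
  have hMw : R⁻¹ * (S * (S * R⁻¹)) = M - ρ⁻¹ • 1 := by
    rw [hMdef, hW2, ← hS2]
    simp only [Matrix.mul_assoc]
    abel
  have keyB : R⁻¹ * (S * N⁻¹ * S) * R⁻¹ = 1 - ρ⁻¹ • M⁻¹ := by
    have h8 : M * (R⁻¹ * (S * N⁻¹ * S) * R⁻¹) = R⁻¹ * (S * (S * R⁻¹)) := by
      calc M * (R⁻¹ * (S * N⁻¹ * S) * R⁻¹)
          = (M * (R⁻¹ * S)) * (N⁻¹ * (S * R⁻¹)) := by simp only [Matrix.mul_assoc]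
      _ = (R⁻¹ * S) * (N * (N⁻¹ * (S * R⁻¹))) := by rw [hMQ]; simp only [Matrix.mul_assoc]
      _ = R⁻¹ * (S * (S * R⁻¹)) := by
            rw [Matrix.mul_nonsing_inv_cancel_left N _ hNdet]; simp only [Matrix.mul_assoc]
    have h9 : R⁻¹ * (S * N⁻¹ * S) * R⁻¹ = M⁻¹ * (R⁻¹ * (S * (S * R⁻¹))) := by
      rw [← h8, Matrix.nonsing_inv_mul_cancel_left M _ hMdet]
    rw [h9, hMw, Matrix.mul_sub, Matrix.nonsing_inv_mul M hMdet, Matrix.mul_smul,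
      Matrix.mul_one]
  -- assemble
  have keyA' : S * P⁻¹ * S = 1 - ρ⁻¹ • (ρ⁻¹ • (1 : Matrix (Fin n) (Fin n) ℝ) + Y * Yᵀ)⁻¹ := by
    rw [keyA, hN1]
  have keyB' : R⁻¹ * (S * N⁻¹ * S) * R⁻¹
      = 1 - ρ⁻¹ • (ρ⁻¹ • (1 : Matrix (Fin n) (Fin n) ℝ) + Yᵀ * Y)⁻¹ := by
    rw [keyB, hMdef]
  constructor
  · constructor
    · intro hA
      rw [keyA'] at hA
      obtain ⟨l, hl, hE, hteq⟩ := forward hYYT hρ ht hA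
      have hE2 : HasEigen (Yᵀ * Y) l := transfer Y hl.ne' hE
      have := backward hYTY hρ hl hE2
      rw [← hteq] at this
      rwa [keyB']
    · intro hB
      rw [keyB'] at hB
      obtain ⟨l, hl, hE, hteq⟩ := forward hYTY hρ ht hB
      have hE2 : HasEigen (Y * Yᵀ) l := by
        have := transfer Yᵀ hl.ne' (by rwa [transpose_transpose])
        rwa [transpose_transpose] at this
      have := backward hYYT hρ hl hE2
      rw [← hteq] at this
      rwa [keyA']
  · intro hA
    rw [keyA'] at hA
    obtain ⟨l, hl, hE, hteq⟩ := forward hYYT hρ ht hA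
    have hE2 : HasEigen (Yᵀ * Y) l := transfer Y hl.ne' hE
    refine ⟨Real.sqrt l, Real.sqrt_pos.mpr hl, ?_, ?_⟩
    · rwa [Real.sq_sqrt hl.le]
    · rwa [Real.sq_sqrt hl.le]

end SameNonzeroAux

open SameNonzeroAux in
theorem same_nonzero_eigenvalues {n : ℕ} (H G : Matrix (Fin n) (Fin n) ℝ)
    (hH : H.PosSemidef) (hG : G.PosDef) (ρ : ℝ) (hρ : 0 < ρ) :
    ∀ t : ℝ, t ≠ 0 →
      ((HasEigen (hH.sqrt * (ρ⁻¹ • G + H)⁻¹ * hH.sqrt) t ↔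
        HasEigen ((hG.posSemidef.sqrt)⁻¹ *
          (hH.sqrt * (ρ⁻¹ • (1 : Matrix (Fin n) (Fin n) ℝ) + hH.sqrt * G⁻¹ * hH.sqrt)⁻¹ * hH.sqrt) *
          (hG.posSemidef.sqrt)⁻¹) t) ∧
      (HasEigen (hH.sqrt * (ρ⁻¹ • G + H)⁻¹ * hH.sqrt) t →
        ∃ s : ℝ, 0 < s ∧
          HasEigen ((hH.sqrt * (hG.posSemidef.sqrt)⁻¹)ᵀ * (hH.sqrt * (hG.posSemidef.sqrt)⁻¹)) (s ^ 2) ∧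
          t = ρ * s ^ 2 / (1 + ρ * s ^ 2))) := by
  intro t ht
  have hSsym : (hH.sqrt)ᵀ = hH.sqrt := by
    have := hH.posSemidef_sqrt.1
    rwa [Matrix.IsHermitian, conjTranspose_eq_transpose_of_trivial] at this
  have hRsym : (hG.posSemidef.sqrt)ᵀ = hG.posSemidef.sqrt := by
    have := hG.posSemidef.posSemidef_sqrt.1
    rwa [Matrix.IsHermitian, conjTranspose_eq_transpose_of_trivial] at this
  exact main_aux H G hH hG ρ hρ hH.sqrt hG.posSemidef.sqrt
    hH.sqrt_mul_self hG.posSemidef.sqrt_mul_self hSsym hRsym t ht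
end

section
/- Let H be symmetric positive semidefinite, G symmetric positive definite, ρ > 0, K = ((1/ρ)G + H)^{-1}. Define ξ = λ_min^+(H^{1/2} K H^{1/2}), the smallest nonzero eigenvalue (with ξ interpreted appropriately if H = 0). Then for every vector g ∈ Range(H): g^T K g ≥ ξ · g^T H^† g. -/
open Matrix

/-- The smallest nonzero eigenvalue of a matrix. -/
noncomputable def lambdaMinPos {n : ℕ} (A : Matrix (Fin n) (Fin n) ℝ) : ℝ :=
  sInf {t : ℝ | t ≠ 0 ∧ HasEigen A t}

/-- The square root of a positive semidefinite matrix, as `Matrix.PosSemidef.sqrt` was defined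
in the older Mathlib. -/
noncomputable def posSemidefSqrt {n : ℕ} {A : Matrix (Fin n) (Fin n) ℝ} (hA : A.PosSemidef) :
    Matrix (Fin n) (Fin n) ℝ :=
  hA.1.eigenvectorUnitary.1 * diagonal ((↑) ∘ (√·) ∘ hA.1.eigenvalues) *
    (star hA.1.eigenvectorUnitary : Matrix (Fin n) (Fin n) ℝ)
open scoped RealInnerProductSpace

/-- Symmetric matrices can be moved across the dot product. -/
lemma herm_dot {n : ℕ} {A : Matrix (Fin n) (Fin n) ℝ} (hA : A.IsHermitian)
    (x y : Fin n → ℝ) : x ⬝ᵥ A *ᵥ y = (A *ᵥ x) ⬝ᵥ y := by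
  rw [dotProduct_mulVec, ← mulVec_transpose, ← conjTranspose_eq_transpose_of_trivial, hA.eq]

lemma inner_eq_dot {n : ℕ} (x y : EuclideanSpace ℝ (Fin n)) :
    ⟪x, y⟫ = (x : Fin n → ℝ) ⬝ᵥ (y : Fin n → ℝ) := by
  rw [EuclideanSpace.inner_eq_star_dotProduct, dotProduct_comm]; rfl

lemma conj_dot {n : ℕ} {S M : Matrix (Fin n) (Fin n) ℝ} (hS : S.IsHermitian)
    (w v : Fin n → ℝ) :
    (S *ᵥ w) ⬝ᵥ M *ᵥ (S *ᵥ v) = w ⬝ᵥ (S * M * S) *ᵥ v := by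
  rw [← herm_dot hS, mulVec_mulVec, mulVec_mulVec]

/-- Every eigenvalue of a symmetric matrix is one of the `eigenvalues`. -/
lemma eigenSet_subset {n : ℕ} {A : Matrix (Fin n) (Fin n) ℝ} (hA : A.IsHermitian) :
    {t : ℝ | t ≠ 0 ∧ HasEigen A t} ⊆ Set.range hA.eigenvalues := by
  rintro t ⟨-, v, hv0, hv⟩
  by_contra h
  have h' : ∀ i, hA.eigenvalues i ≠ t := by
    intro i hi; exact h ⟨i, hi⟩
  apply hv0
  set v' : EuclideanSpace ℝ (Fin n) := (WithLp.equiv 2 (Fin n → ℝ)).symm v with hv'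
  have hcv : ∀ i, ⟪hA.eigenvectorBasis i, v'⟫ = 0 := by
    intro i
    have h1 : (A *ᵥ ⇑(hA.eigenvectorBasis i)) ⬝ᵥ v
        = hA.eigenvalues i * (⇑(hA.eigenvectorBasis i) ⬝ᵥ v) := by
      rw [hA.mulVec_eigenvectorBasis, smul_dotProduct]; rfl
    have h2 : (A *ᵥ ⇑(hA.eigenvectorBasis i)) ⬝ᵥ v
        = t * (⇑(hA.eigenvectorBasis i) ⬝ᵥ v) := by
      rw [← herm_dot hA, hv, dotProduct_smul]; rfl
    have h3 : (hA.eigenvalues i - t) * (⇑(hA.eigenvectorBasis i) ⬝ᵥ v) = 0 := by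
      rw [sub_mul, ← h1, ← h2, sub_self]
    have h4 : (⇑(hA.eigenvectorBasis i) ⬝ᵥ v) = 0 := by
      rcases mul_eq_zero.mp h3 with h5 | h5
      · exact absurd (by linarith) (h' i)
      · exact h5
    rw [inner_eq_dot]; exact h4
  have : ⟪v', v'⟫ = 0 := by
    rw [← hA.eigenvectorBasis.sum_inner_mul_inner v' v']
    refine Finset.sum_eq_zero fun i _ => ?_
    rw [hcv i, mul_zero]
  have : v' = 0 := inner_self_eq_zero.mp this
  have : v = 0 := by
    have := congrArg (WithLp.equiv 2 (Fin n → ℝ)) this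
    simpa [hv'] using this
  exact this

/-- Key quadratic form lower bound. -/
lemma quad_lower_bound {n : ℕ} {A : Matrix (Fin n) (Fin n) ℝ} (hA : A.PosSemidef)
    (w : Fin n → ℝ) (hw : ∀ v : Fin n → ℝ, A *ᵥ v = 0 → v ⬝ᵥ w = 0) :
    w ⬝ᵥ A *ᵥ w ≥ lambdaMinPos A * (w ⬝ᵥ w) := by
  classical
  set B := hA.1.eigenvectorBasis with hB
  set d := hA.1.eigenvalues with hd
  set w' : EuclideanSpace ℝ (Fin n) := (WithLp.equiv 2 (Fin n → ℝ)).symm w with hw'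
  set c : Fin n → ℝ := fun i => ⇑(B i) ⬝ᵥ w with hc
  have hic : ∀ i, ⟪B i, w'⟫ = c i := fun i => by rw [inner_eq_dot]; rfl
  have hic' : ∀ i, ⟪w', B i⟫ = c i := by
    intro i; rw [real_inner_comm]; exact hic i
  have hBA : ∀ i, ⟪B i, (WithLp.equiv 2 (Fin n → ℝ)).symm (A *ᵥ w)⟫ = d i * c i := by
    intro i
    rw [inner_eq_dot]
    show ⇑(B i) ⬝ᵥ (A *ᵥ w) = d i * c i
    rw [herm_dot hA.1, hA.1.mulVec_eigenvectorBasis, smul_dotProduct]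
    rfl
  have h1 : w ⬝ᵥ A *ᵥ w = ∑ i, c i * (d i * c i) := by
    have := B.sum_inner_mul_inner w' ((WithLp.equiv 2 (Fin n → ℝ)).symm (A *ᵥ w))
    simp_rw [hic', hBA] at this
    rw [inner_eq_dot] at this
    exact this.symm
  have h2 : w ⬝ᵥ w = ∑ i, c i * c i := by
    have := B.sum_inner_mul_inner w' w'
    simp_rw [hic', hic] at this
    exact this.symm
  have hdz : ∀ i, d i = 0 → c i = 0 := by
    intro i hdi
    apply hw
    rw [hA.1.mulVec_eigenvectorBasis, ← hd, hdi, zero_smul]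
  have hbdd : BddBelow {t : ℝ | t ≠ 0 ∧ HasEigen A t} :=
    (Set.finite_range d).bddBelow.mono (eigenSet_subset hA.1)
  have hle : ∀ i, d i ≠ 0 → lambdaMinPos A ≤ d i := by
    intro i hdi
    refine csInf_le hbdd ⟨hdi, ⇑(B i), ?_, hA.1.mulVec_eigenvectorBasis i⟩
    intro h0
    have := B.orthonormal.ne_zero i
    apply this
    ext j
    simpa using congrFun h0 j
  rw [h1, h2, Finset.mul_sum]
  refine Finset.sum_le_sum fun i _ => ?_
  by_cases hdi : d i = 0
  · rw [hdz i hdi]; ring_nf; exact le_refl 0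
  · have h5 : lambdaMinPos A ≤ d i := hle i hdi
    have h6 : 0 ≤ c i * c i := mul_self_nonneg _
    calc lambdaMinPos A * (c i * c i) ≤ d i * (c i * c i) :=
          mul_le_mul_of_nonneg_right h5 h6
      _ = c i * (d i * c i) := by ring

lemma posSemidefSqrt_posSemidef {n : ℕ} {A : Matrix (Fin n) (Fin n) ℝ} (hA : A.PosSemidef) :
    (posSemidefSqrt hA).PosSemidef := by
  unfold posSemidefSqrt
  have h : (diagonal ((↑) ∘ (√·) ∘ hA.1.eigenvalues) : Matrix (Fin n) (Fin n) ℝ).PosSemidef := by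
    rw [posSemidef_diagonal_iff]; intro i; simp [Real.sqrt_nonneg]
  have := h.mul_mul_conjTranspose_same (hA.1.eigenvectorUnitary : Matrix (Fin n) (Fin n) ℝ)
  exact this
lemma posSemidefSqrt_mul_self {n : ℕ} {A : Matrix (Fin n) (Fin n) ℝ} (hA : A.PosSemidef) :
    posSemidefSqrt hA * posSemidefSqrt hA = A := by
  unfold posSemidefSqrt
  conv_rhs => rw [hA.1.spectral_theorem, Unitary.conjStarAlgAut_apply]
  have hu : (star hA.1.eigenvectorUnitary : Matrix (Fin n) (Fin n) ℝ) * hA.1.eigenvectorUnitary.1 = 1 :=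
    Unitary.coe_star_mul_self _
  have hd : (diagonal ((↑) ∘ (√·) ∘ hA.1.eigenvalues) : Matrix (Fin n) (Fin n) ℝ) *
      diagonal ((↑) ∘ (√·) ∘ hA.1.eigenvalues) = diagonal (RCLike.ofReal ∘ hA.1.eigenvalues) := by
    rw [diagonal_mul_diagonal]; congr 1; funext i
    simp [Real.mul_self_sqrt (hA.eigenvalues_nonneg i)]
  calc _ = hA.1.eigenvectorUnitary.1 * diagonal ((↑) ∘ (√·) ∘ hA.1.eigenvalues) *
      ((star hA.1.eigenvectorUnitary : Matrix (Fin n) (Fin n) ℝ) * hA.1.eigenvectorUnitary.1) *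
      diagonal ((↑) ∘ (√·) ∘ hA.1.eigenvalues) * (star hA.1.eigenvectorUnitary : Matrix (Fin n) (Fin n) ℝ) := by
        simp only [Matrix.mul_assoc]
    _ = _ := by rw [hu, Matrix.mul_one, Matrix.mul_assoc _ (diagonal _) (diagonal _), hd]

theorem K_lower_bound_via_pinv {n : ℕ} (H G Hd : Matrix (Fin n) (Fin n) ℝ)
    (hH : H.PosSemidef) (hHne : H ≠ 0) (hG : G.PosDef) (ρ : ℝ) (hρ : 0 < ρ)
    (hHd : IsMoorePenrose H Hd)
    (g : Fin n → ℝ) (hg : g ∈ LinearMap.range H.mulVecLin) :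
    g ⬝ᵥ ((ρ⁻¹ • G + H)⁻¹).mulVec g ≥
      lambdaMinPos (posSemidefSqrt hH * (ρ⁻¹ • G + H)⁻¹ * posSemidefSqrt hH) * (g ⬝ᵥ Hd.mulVec g) := by
  classical
  obtain ⟨x, hx⟩ := hg
  have hx : H *ᵥ x = g := hx
  set S := posSemidefSqrt hH with hSdef
  have hS : S.PosSemidef := posSemidefSqrt_posSemidef hH
  have hSS : S * S = H := posSemidefSqrt_mul_self hH
  have hGs : (ρ⁻¹ • G).PosDef := by
    refine PosDef.of_dotProduct_mulVec_pos ?_ (fun y hy => ?_)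
    · show (ρ⁻¹ • G)ᴴ = ρ⁻¹ • G
      rw [conjTranspose_smul, hG.1.eq]; norm_num
    · rw [smul_mulVec, dotProduct_smul, smul_eq_mul]
      exact mul_pos (inv_pos.mpr hρ) (hG.dotProduct_mulVec_pos hy)
  have hM : (ρ⁻¹ • G + H).PosDef := hGs.add_posSemidef hH
  have hK : ((ρ⁻¹ • G + H)⁻¹).PosDef := hM.inv
  set K := (ρ⁻¹ • G + H)⁻¹ with hKdef
  set A := S * K * S with hAdef
  have hA : A.PosSemidef := by
    have := hK.posSemidef.mul_mul_conjTranspose_same S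
    rwa [hS.1.eq] at this
  -- identity 1 : g ⬝ᵥ K g = w ⬝ᵥ A w
  have hg' : g = S *ᵥ (S *ᵥ x) := by
    rw [mulVec_mulVec, hSS, hx]
  have e1 : g ⬝ᵥ K *ᵥ g = (S *ᵥ x) ⬝ᵥ A *ᵥ (S *ᵥ x) := by
    rw [hg', conj_dot hS.1]
  -- identity 2 : g ⬝ᵥ Hd g = w ⬝ᵥ w
  have e2 : g ⬝ᵥ Hd *ᵥ g = (S *ᵥ x) ⬝ᵥ (S *ᵥ x) := by
    rw [← hx, conj_dot hH.1, hHd.1, ← hSS, ← mulVec_mulVec, herm_dot hS.1]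
  -- kernel condition
  have hker : ∀ v : Fin n → ℝ, A *ᵥ v = 0 → v ⬝ᵥ (S *ᵥ x) = 0 := by
    intro v hv
    have hq : (S *ᵥ v) ⬝ᵥ K *ᵥ (S *ᵥ v) = 0 := by
      rw [conj_dot hS.1, ← hAdef, hv, dotProduct_zero]
    have hSv : S *ᵥ v = 0 := by
      by_contra h0
      have h1 := hK.dotProduct_mulVec_pos h0
      rw [star_trivial] at h1
      exact (ne_of_gt h1) hq
    rw [herm_dot hS.1 v x, hSv, zero_dotProduct]
  have := quad_lower_bound hA (S *ᵥ x) hker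
  rw [← e1, ← e2] at this
  exact this
end

section
/- Let f(x) = (1/m)Σ_{i=1}^m φ_i(a_i^T x) + (α/2)‖x‖² with α > 0, a_i ∈ ℝ^n, and φ_i twice differentiable with u ≤ φ_i''(t) ≤ ℓ for all t, where 0 ≤ u ≤ ℓ. Then for all x, y: (μ/2)(x−y)^T ∇²f(y)(x−y) ≤ f(x) − f(y) − ⟨∇f(y), x−y⟩ ≤ (L/2)(x−y)^T ∇²f(y)(x−y), with L = (ℓσ_max²(A) + mα)/(uσ_max²(A) + mα) and μ = (uσ_max²(A) + mα)/(ℓσ_max²(A) + mα), where A = [a_1,...,a_m] and σ_max(A) is its largest singular value. -/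
open Matrix Finset



-- scalar second-order upper bound
lemma taylor_upper (ψ ψ' ψ'' : ℝ → ℝ)
    (h1 : ∀ t, HasDerivAt ψ (ψ' t) t) (h2 : ∀ t, HasDerivAt ψ' (ψ'' t) t)
    (M : ℝ) (hM : ∀ t, ψ'' t ≤ M) (c s : ℝ) :
    ψ (c + s) - ψ c - ψ' c * s ≤ M * s ^ 2 / 2 := by
  set g : ℝ → ℝ := fun t => ψ (c + t) - ψ c - ψ' c * t - M * t ^ 2 / 2 with hg
  set g' : ℝ → ℝ := fun t => ψ' (c + t) - ψ' c - M * t with hg'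
  have hgd : ∀ t, HasDerivAt g (g' t) t := by
    intro t
    have h0 : HasDerivAt (fun t : ℝ => ψ (c + t)) (ψ' (c + t)) t := by
      simpa [Function.comp_def] using (h1 (c + t)).comp t ((hasDerivAt_id t).const_add c)
    have h3 : HasDerivAt (fun t : ℝ =>M * t ^ 2 / 2) (M * t) t := by
      have := ((hasDerivAt_pow 2 t).const_mul M).div_const 2
      simpa using this.congr_deriv (by ring)
    simpa [hg, hg', Pi.sub_def] using ((h0.sub_const (ψ c)).sub ((hasDerivAt_id t).const_mul (ψ' c))).sub h3
      |>.congr_deriv (by ring)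
  have hg'd : ∀ t, HasDerivAt g' (ψ'' (c + t) - M) t := by
    intro t
    have h0 : HasDerivAt (fun t : ℝ => ψ' (c + t)) (ψ'' (c + t)) t := by
      simpa [Function.comp_def] using (h2 (c + t)).comp t ((hasDerivAt_id t).const_add c)
    simpa [hg', Pi.sub_def] using ((h0.sub_const (ψ' c)).sub ((hasDerivAt_id t).const_mul M))
  have hganti : Antitone g' :=
    antitone_of_deriv_nonpos (fun t => (hg'd t).differentiableAt)
      (fun t => by rw [(hg'd t).deriv]; linarith [hM (c + t)])
  have hg0 : g 0 = 0 := by simp [hg]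
  have hg'0 : g' 0 = 0 := by simp [hg']
  have key : g s ≤ 0 := by
    rcases le_total 0 s with hs | hs
    · have : AntitoneOn g (Set.Ici 0) := by
        apply antitoneOn_of_deriv_nonpos (convex_Ici 0)
          (fun t _ => (hgd t).continuousAt.continuousWithinAt)
          (fun t _ => (hgd t).differentiableAt.differentiableWithinAt)
        intro t ht
        rw [(hgd t).deriv]
        rw [interior_Ici] at ht
        calc g' t ≤ g' 0 := hganti (le_of_lt ht)
          _ = 0 := hg'0
      simpa [hg0] using this Set.self_mem_Ici hs hs
    · have : MonotoneOn g (Set.Iic 0) := by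
        apply monotoneOn_of_deriv_nonneg (convex_Iic 0)
          (fun t _ => (hgd t).continuousAt.continuousWithinAt)
          (fun t _ => (hgd t).differentiableAt.differentiableWithinAt)
        intro t ht
        rw [(hgd t).deriv]
        rw [interior_Iic] at ht
        calc (0:ℝ) = g' 0 := hg'0.symm
          _ ≤ g' t := hganti (le_of_lt ht)
      simpa [hg0] using this hs Set.self_mem_Iic hs
  have hfin : ψ (c + s) - ψ c - ψ' c * s - M * s ^ 2 / 2 ≤ 0 := key
  linarith

lemma taylor_lower (ψ ψ' ψ'' : ℝ → ℝ)
    (h1 : ∀ t, HasDerivAt ψ (ψ' t) t) (h2 : ∀ t, HasDerivAt ψ' (ψ'' t) t)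
    (u : ℝ) (hu : ∀ t, u ≤ ψ'' t) (c s : ℝ) :
    u * s ^ 2 / 2 ≤ ψ (c + s) - ψ c - ψ' c * s := by
  have := taylor_upper (fun t => -ψ t) (fun t => -ψ' t) (fun t => -ψ'' t)
    (fun t => (h1 t).neg) (fun t => (h2 t).neg) (-u) (fun t => neg_le_neg (hu t)) c s
  simp at this; linarith


lemma rayleigh_bound {n : ℕ} (M : Matrix (Fin n) (Fin n) ℝ) (hM : M.IsHermitian) (s : ℝ)
    (hub : ∀ t : ℝ, (∃ v : Fin n → ℝ, v ≠ 0 ∧ M.mulVec v = t • v) → t ≤ s)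
    (d : Fin n → ℝ) : d ⬝ᵥ M.mulVec d ≤ s * (d ⬝ᵥ d) := by
  classical
  set b := hM.eigenvectorBasis with hb
  have hT : Mᵀ = M := by
    ext i k
    have := congrFun (congrFun hM.eq i) k
    simpa [conjTranspose_apply] using this
  have hev : ∀ j, hM.eigenvalues j ≤ s := by
    intro j
    refine hub _ ⟨b j, ?_, hM.mulVec_eigenvectorBasis j⟩
    intro h0
    exact hM.eigenvectorBasis.orthonormal.ne_zero j (by ext i; exact congrFun h0 i)
  have hinner : ∀ v w : EuclideanSpace ℝ (Fin n), (inner ℝ v w : ℝ) = dotProduct v w := by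
    intro v w
    simp [PiLp.inner_apply, RCLike.inner_apply, dotProduct, mul_comm]
  set d' : EuclideanSpace ℝ (Fin n) := WithLp.toLp 2 d with hd'
  set Md : EuclideanSpace ℝ (Fin n) := WithLp.toLp 2 (M.mulVec d) with hMd
  have h1 : d ⬝ᵥ M.mulVec d = ∑ j, (inner ℝ d' (b j) : ℝ) * (inner ℝ (b j) Md : ℝ) := by
    rw [b.sum_inner_mul_inner d' Md, hinner]
  have h2 : ∀ j, (inner ℝ (b j) Md : ℝ) = hM.eigenvalues j * (inner ℝ (b j) d' : ℝ) := by
    intro j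
    rw [hinner, hinner]
    show dotProduct (⇑(hM.eigenvectorBasis j)) (M *ᵥ d)
      = hM.eigenvalues j * dotProduct (⇑(hM.eigenvectorBasis j)) d
    rw [dotProduct_mulVec, ← mulVec_transpose, hT, hM.mulVec_eigenvectorBasis j,
      smul_dotProduct]
    rfl
  have h3 : d ⬝ᵥ d = ∑ j, (inner ℝ d' (b j) : ℝ) * (inner ℝ (b j) d' : ℝ) := by
    rw [b.sum_inner_mul_inner d' d', hinner]
  have h4 : ∀ j, (inner ℝ d' (b j) : ℝ) * (inner ℝ (b j) d' : ℝ) = (inner ℝ (b j) d' : ℝ) ^ 2 := by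
    intro j; rw [real_inner_comm]; ring
  rw [h1, h3, Finset.mul_sum]
  apply Finset.sum_le_sum
  intro j _
  rw [h2 j]
  have e1 : (inner ℝ d' (b j) : ℝ) * (hM.eigenvalues j * (inner ℝ (b j) d' : ℝ))
      = hM.eigenvalues j * (inner ℝ (b j) d' : ℝ) ^ 2 := by
    rw [real_inner_comm d' (b j)]; ring
  have e2 : s * ((inner ℝ d' (b j) : ℝ) * (inner ℝ (b j) d' : ℝ))
      = s * (inner ℝ (b j) d' : ℝ) ^ 2 := by
    rw [real_inner_comm d' (b j)]; ring
  rw [e1, e2]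
  exact mul_le_mul_of_nonneg_right (hev j) (sq_nonneg _)


set_option maxHeartbeats 1000000 in
/-- Relative smoothness/convexity constants for generalized linear models. -/
theorem glm_relative_smoothness_convexity {n m : ℕ} (hm : 0 < m)
    (a : Fin m → (Fin n → ℝ)) (φ φ' φ'' : Fin m → ℝ → ℝ)
    (u ℓ α : ℝ) (hu : 0 ≤ u) (huℓ : u ≤ ℓ) (hα : 0 < α)
    (hderiv : ∀ i t, HasDerivAt (φ i) (φ' i t) t)
    (hderiv' : ∀ i t, HasDerivAt (φ' i) (φ'' i t) t)
    (hbound : ∀ i t, u ≤ φ'' i t ∧ φ'' i t ≤ ℓ)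
    (smax2 : ℝ)
    (hsmax : IsGreatest {t : ℝ | ∃ v : Fin n → ℝ, v ≠ 0 ∧
      ((Matrix.of fun j i => a i j : Matrix (Fin n) (Fin m) ℝ) *
        (Matrix.of fun j i => a i j : Matrix (Fin n) (Fin m) ℝ)ᵀ).mulVec v = t • v} smax2) :
    ∀ x y : Fin n → ℝ,
      ((u * smax2 + m * α) / (ℓ * smax2 + m * α)) / 2 *
          ((1 / m) * ∑ i, φ'' i (a i ⬝ᵥ y) * (a i ⬝ᵥ (x - y)) ^ 2 + α * ((x - y) ⬝ᵥ (x - y))) ≤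
        ((1 / m) * ∑ i, φ i (a i ⬝ᵥ x) + α / 2 * (x ⬝ᵥ x)) -
          ((1 / m) * ∑ i, φ i (a i ⬝ᵥ y) + α / 2 * (y ⬝ᵥ y)) -
          ((1 / m) * ∑ i, φ' i (a i ⬝ᵥ y) * (a i ⬝ᵥ (x - y)) + α * (y ⬝ᵥ (x - y))) ∧
      ((1 / m) * ∑ i, φ i (a i ⬝ᵥ x) + α / 2 * (x ⬝ᵥ x)) -
          ((1 / m) * ∑ i, φ i (a i ⬝ᵥ y) + α / 2 * (y ⬝ᵥ y)) -
          ((1 / m) * ∑ i, φ' i (a i ⬝ᵥ y) * (a i ⬝ᵥ (x - y)) + α * (y ⬝ᵥ (x - y))) ≤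
        ((ℓ * smax2 + m * α) / (u * smax2 + m * α)) / 2 *
          ((1 / m) * ∑ i, φ'' i (a i ⬝ᵥ y) * (a i ⬝ᵥ (x - y)) ^ 2 + α * ((x - y) ⬝ᵥ (x - y))) := by
  classical
  set A : Matrix (Fin n) (Fin m) ℝ := Matrix.of fun j i => a i j with hA
  have hm' : (0:ℝ) < m := by exact_mod_cast hm
  have hℓ0 : 0 ≤ ℓ := hu.trans huℓ
  -- the Gram matrix is Hermitian
  have hherm : (A * Aᵀ).IsHermitian := by
    unfold Matrix.IsHermitian
    ext i k
    simp [Matrix.conjTranspose_apply, Matrix.mul_apply, mul_comm]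
  -- quadratic form of the Gram matrix
  have hquadform : ∀ w : Fin n → ℝ, w ⬝ᵥ (A * Aᵀ).mulVec w = ∑ i, (a i ⬝ᵥ w) ^ 2 := by
    intro w
    have hAt : Aᵀ.mulVec w = fun i => a i ⬝ᵥ w := by
      ext i
      simp [Matrix.mulVec, dotProduct, hA, mul_comm]
    rw [← Matrix.mulVec_mulVec, Matrix.dotProduct_mulVec, ← Matrix.mulVec_transpose, hAt]
    simp [dotProduct, sq]
  -- smax2 is nonneg
  have hσ : 0 ≤ smax2 := by
    obtain ⟨v, hv0, hveq⟩ := hsmax.1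
    have h1 : v ⬝ᵥ (A * Aᵀ).mulVec v = smax2 * (v ⬝ᵥ v) := by
      rw [hveq]
      simp only [dotProduct, Pi.smul_apply, smul_eq_mul, Finset.mul_sum]
      exact Finset.sum_congr rfl fun i _ => by ring
    have h2 : 0 ≤ v ⬝ᵥ (A * Aᵀ).mulVec v := by
      rw [hquadform]; exact Finset.sum_nonneg fun i _ => sq_nonneg _
    have h3 : 0 < v ⬝ᵥ v := by
      rcases lt_or_eq_of_le (Finset.sum_nonneg fun i _ => mul_self_nonneg (v i) : 0 ≤ v ⬝ᵥ v) with h | h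
      · exact h
      · exact absurd (dotProduct_self_eq_zero.mp h.symm) hv0
    nlinarith
  intro x y
  set d : Fin n → ℝ := x - y with hd
  have hxy : x = y + d := by rw [hd]; abel
  have hdot : ∀ i : Fin m, a i ⬝ᵥ x = a i ⬝ᵥ y + a i ⬝ᵥ d := by
    intro i; rw [hxy, dotProduct_add]
  set D : ℝ := d ⬝ᵥ d with hD
  set S : ℝ := ∑ i, (a i ⬝ᵥ d) ^ 2 with hS
  have hS0 : 0 ≤ S := Finset.sum_nonneg fun i _ => sq_nonneg _
  have hD0 : 0 ≤ D := Finset.sum_nonneg fun i _ => mul_self_nonneg (d i)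
  have hSle : S ≤ smax2 * D := by
    rw [hS, ← hquadform d]
    exact rayleigh_bound (A * Aᵀ) hherm smax2 (fun t ht => hsmax.2 ht) d
  set T : ℝ := ∑ i, (φ i (a i ⬝ᵥ x) - φ i (a i ⬝ᵥ y) - φ' i (a i ⬝ᵥ y) * (a i ⬝ᵥ d)) with hT
  set K : ℝ := ∑ i, φ'' i (a i ⬝ᵥ y) * (a i ⬝ᵥ d) ^ 2 with hK
  have hTl : u * S / 2 ≤ T := by
    rw [hT, hS]
    have : ∑ i, u * (a i ⬝ᵥ d) ^ 2 / 2 ≤ ∑ i, (φ i (a i ⬝ᵥ x) - φ i (a i ⬝ᵥ y) - φ' i (a i ⬝ᵥ y) * (a i ⬝ᵥ d)) := by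
      apply Finset.sum_le_sum
      intro i _
      rw [hdot i]
      exact taylor_lower (φ i) (φ' i) (φ'' i) (hderiv i) (hderiv' i) u
        (fun t => (hbound i t).1) (a i ⬝ᵥ y) (a i ⬝ᵥ d)
    calc u * (∑ i, (a i ⬝ᵥ d) ^ 2) / 2 = ∑ i, u * (a i ⬝ᵥ d) ^ 2 / 2 := by
          rw [Finset.mul_sum, Finset.sum_div]
      _ ≤ _ := this
  have hTu : T ≤ ℓ * S / 2 := by
    rw [hT, hS]
    have : ∑ i, (φ i (a i ⬝ᵥ x) - φ i (a i ⬝ᵥ y) - φ' i (a i ⬝ᵥ y) * (a i ⬝ᵥ d)) ≤ ∑ i, ℓ * (a i ⬝ᵥ d) ^ 2 / 2 := by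
      apply Finset.sum_le_sum
      intro i _
      rw [hdot i]
      exact taylor_upper (φ i) (φ' i) (φ'' i) (hderiv i) (hderiv' i) ℓ
        (fun t => (hbound i t).2) (a i ⬝ᵥ y) (a i ⬝ᵥ d)
    calc ∑ i, (φ i (a i ⬝ᵥ x) - φ i (a i ⬝ᵥ y) - φ' i (a i ⬝ᵥ y) * (a i ⬝ᵥ d)) ≤ ∑ i, ℓ * (a i ⬝ᵥ d) ^ 2 / 2 := this
      _ = ℓ * (∑ i, (a i ⬝ᵥ d) ^ 2) / 2 := by rw [Finset.mul_sum, Finset.sum_div]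
  have hKl : u * S ≤ K := by
    rw [hK, hS, Finset.mul_sum]
    exact Finset.sum_le_sum fun i _ =>
      mul_le_mul_of_nonneg_right (hbound i (a i ⬝ᵥ y)).1 (sq_nonneg _)
  have hKu : K ≤ ℓ * S := by
    rw [hK, hS, Finset.mul_sum]
    exact Finset.sum_le_sum fun i _ =>
      mul_le_mul_of_nonneg_right (hbound i (a i ⬝ᵥ y)).2 (sq_nonneg _)
  have hsum : T = ∑ i, φ i (a i ⬝ᵥ x) - ∑ i, φ i (a i ⬝ᵥ y) - ∑ i, φ' i (a i ⬝ᵥ y) * (a i ⬝ᵥ d) := by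
    rw [hT, Finset.sum_sub_distrib, Finset.sum_sub_distrib]
  have hquad : x ⬝ᵥ x = y ⬝ᵥ y + 2 * (y ⬝ᵥ d) + D := by
    rw [hxy, hD, dotProduct_add, add_dotProduct, add_dotProduct, dotProduct_comm d y]
    ring
  have hsplit : ((1 / (m:ℝ)) * ∑ i, φ i (a i ⬝ᵥ x) + α / 2 * (x ⬝ᵥ x)) -
      ((1 / (m:ℝ)) * ∑ i, φ i (a i ⬝ᵥ y) + α / 2 * (y ⬝ᵥ y)) -
      ((1 / (m:ℝ)) * ∑ i, φ' i (a i ⬝ᵥ y) * (a i ⬝ᵥ d) + α * (y ⬝ᵥ d)) =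
      (1 / (m:ℝ)) * T + α / 2 * D := by
    rw [hsum, hquad]; ring
  clear_value A d D S T K
  clear hsum hquad hdot hxy hquadform hherm hsmax hderiv hderiv' hbound hA hd hD hS hT hK
  have hden2 : 0 < u * smax2 + m * α := by nlinarith [mul_nonneg hu hσ, mul_pos hm' hα]
  have hden1 : 0 < ℓ * smax2 + m * α := by nlinarith [mul_nonneg hℓ0 hσ, mul_pos hm' hα]
  have key1 : (u * smax2 + m * α) * (K + m * α * D) ≤ (ℓ * smax2 + m * α) * (2 * T + m * α * D) := by
    nlinarith [mul_nonneg hden1.le (by linarith : (0:ℝ) ≤ 2 * T - u * S),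
      mul_nonneg hden2.le (by linarith : (0:ℝ) ≤ ℓ * S - K),
      mul_nonneg (mul_nonneg (mul_pos hm' hα).le (by linarith : (0:ℝ) ≤ ℓ - u))
        (by linarith : (0:ℝ) ≤ smax2 * D - S)]
  have key2 : (u * smax2 + m * α) * (2 * T + m * α * D) ≤ (ℓ * smax2 + m * α) * (K + m * α * D) := by
    nlinarith [mul_nonneg hden2.le (by linarith : (0:ℝ) ≤ ℓ * S - 2 * T),
      mul_nonneg hden1.le (by linarith : (0:ℝ) ≤ K - u * S),
      mul_nonneg (mul_nonneg (mul_pos hm' hα).le (by linarith : (0:ℝ) ≤ ℓ - u))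
        (by linarith : (0:ℝ) ≤ smax2 * D - S)]
  rw [hsplit]
  constructor
  · have e1 : ((u * smax2 + m * α) / (ℓ * smax2 + m * α)) / 2 * ((1 / (m:ℝ)) * K + α * D) =
        ((u * smax2 + m * α) * (K + m * α * D)) / (2 * m * (ℓ * smax2 + m * α)) := by
      field_simp
    have e2 : (1 / (m:ℝ)) * T + α / 2 * D = (2 * T + m * α * D) / (2 * m) := by
      field_simp
    rw [e1, e2, div_le_div_iff₀ (by positivity) (by positivity)]
    linarith [mul_le_mul_of_nonneg_right key1 (by positivity : (0:ℝ) ≤ 2 * (m:ℝ))]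
  · have e1 : ((ℓ * smax2 + m * α) / (u * smax2 + m * α)) / 2 * ((1 / (m:ℝ)) * K + α * D) =
        ((ℓ * smax2 + m * α) * (K + m * α * D)) / (2 * m * (u * smax2 + m * α)) := by
      field_simp
    have e2 : (1 / (m:ℝ)) * T + α / 2 * D = (2 * T + m * α * D) / (2 * m) := by
      field_simp
    rw [e1, e2, div_le_div_iff₀ (by positivity) (by positivity)]
    linarith [mul_le_mul_of_nonneg_right key2 (by positivity : (0:ℝ) ≤ 2 * (m:ℝ))]
end
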